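/- Let ζ be a primitive d-th root of unity with d ≥ 2 dividing p_k, let P be a nonzero integer, and suppose that P·(ζ^a − 1)(ζ^b − 1) = ±ζ^h·(ζ − 1)(ζ^c − 1) for all divisors d ≥ 2 of p_k, where a, b, c are coprime to p_k and h is an integer. If p_k ≥ 2, then |P| = 1. -/

import Mathlib

set_option maxHeartbeats 800000

private lemma pow_mod_eq {ζ : ℂ} {p : ℕ} (h1 : ζ ^ p = 1) (n : ℕ) : ζ ^ n = ζ ^ (n % p) := by
  conv_lhs => rw [← Nat.div_add_mod n p]
  rw [pow_add, pow_mul, h1, one_pow, one_mul]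

private lemma reindex_prod {p : ℕ} [NeZero p] {ζ : ℂ} (h1 : ζ ^ p = 1)
    {m : ℕ} (hm : Nat.Coprime m p) (f : ℂ → ℝ) :
    ∏ x ∈ (Finset.univ.erase (0 : ZMod p)), f (ζ ^ (x.val * m)) =
      ∏ x ∈ (Finset.univ.erase (0 : ZMod p)), f (ζ ^ x.val) := by
  have hpow : ∀ x : ZMod p, ζ ^ (x.val * m) = ζ ^ ((x * (m : ZMod p)).val) := by
    intro x
    have hmeq : x.val * m % p = x.val * (m % p) % p :=
      Nat.ModEq.mul_left _ (Nat.mod_modEq m p).symm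
    rw [pow_mod_eq h1 (x.val * m), pow_mod_eq h1 ((x * (m : ZMod p)).val)]
    congr 1
    rw [ZMod.val_mul, ZMod.val_natCast, Nat.mod_mod_of_dvd _ dvd_rfl]
    exact hmeq
  set u : (ZMod p)ˣ := ZMod.unitOfCoprime m hm with hu
  have hucoe : (u : ZMod p) = (m : ZMod p) := ZMod.coe_unitOfCoprime m hm
  refine Finset.prod_bij' (fun x _ => x * (u : ZMod p))
    (fun x _ => x * ((u⁻¹ : (ZMod p)ˣ) : ZMod p)) ?_ ?_ ?_ ?_ ?_
  · intro x hx
    simp only [Finset.mem_erase, Finset.mem_univ, and_true] at hx ⊢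
    exact fun h => hx (by simpa using (Units.mul_left_eq_zero (a := x) (u := u)).mp h)
  · intro x hx
    simp only [Finset.mem_erase, Finset.mem_univ, and_true] at hx ⊢
    exact fun h => hx (by simpa using (Units.mul_left_eq_zero (a := x) (u := u⁻¹)).mp h)
  · intro x _; simp [mul_assoc, ← Units.val_mul]
  · intro x _; simp [mul_assoc, ← Units.val_mul]
  · intro x _
    rw [hpow x, hucoe]

theorem norm_forces_unit (p : ℕ) (hp : 2 ≤ p) (P : ℤ) (hP : P ≠ 0)
    (a b c : ℕ) (ha : Nat.Coprime a p) (hb : Nat.Coprime b p) (hc : Nat.Coprime c p)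
    (H : ∀ d : ℕ, 2 ≤ d → d ∣ p → ∀ ζ : ℂ, IsPrimitiveRoot ζ d →
      ∃ (h : ℕ) (ε : ℤ), (ε = 1 ∨ ε = -1) ∧
        (P : ℂ) * (ζ ^ a - 1) * (ζ ^ b - 1) = (ε : ℂ) * ζ ^ h * (ζ - 1) * (ζ ^ c - 1)) :
    P.natAbs = 1 := by
  have hp0 : 0 < p := by omega
  haveI : NeZero p := ⟨by omega⟩
  obtain ⟨ζ, hζ⟩ : ∃ ζ : ℂ, IsPrimitiveRoot ζ p :=
    ⟨_, Complex.isPrimitiveRoot_exp p (by omega)⟩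
  have h1 : ζ ^ p = 1 := hζ.pow_eq_one
  have habs1 : ‖ζ‖ = 1 := Complex.norm_eq_one_of_pow_eq_one h1 (by omega)
  set S : Finset (ZMod p) := Finset.univ.erase 0 with hS
  set N : ℝ := (P.natAbs : ℝ) with hN
  have key : ∀ x ∈ S, N * ‖ζ ^ (x.val * a) - 1‖ * ‖ζ ^ (x.val * b) - 1‖
      = ‖ζ ^ x.val - 1‖ * ‖ζ ^ (x.val * c) - 1‖ := by
    intro x hx
    have hx0 : x ≠ 0 := (Finset.mem_erase.mp hx).1
    set j := x.val with hj
    have hj0 : 0 < j := Nat.pos_of_ne_zero (fun h => hx0 (by rwa [← ZMod.val_eq_zero x]))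
    have hjp : j < p := ZMod.val_lt x
    set g := Nat.gcd j p with hg
    have hg0 : 0 < g := Nat.gcd_pos_of_pos_left p hj0
    have hgdvdp : g ∣ p := Nat.gcd_dvd_right j p
    set d := p / g with hd
    have hddvd : d ∣ p := Nat.div_dvd_of_dvd hgdvdp
    have hpd : p = g * d := (Nat.mul_div_cancel' hgdvdp).symm
    have hd1 : d ≠ 1 := by
      intro h
      rw [h, mul_one] at hpd
      have hpj : p ∣ j := hpd ▸ Nat.gcd_dvd_left j p
      have := Nat.le_of_dvd hj0 hpj
      omega
    have hd2 : 2 ≤ d := by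
      have : 0 < d := Nat.div_pos (Nat.le_of_dvd hp0 hgdvdp) hg0
      omega
    have hprim_g : IsPrimitiveRoot (ζ ^ g) d := hζ.pow hp0 hpd
    have hjg : j = g * (j / g) := (Nat.mul_div_cancel' (Nat.gcd_dvd_left j p)).symm
    have hcop : (j / g).Coprime d := Nat.coprime_div_gcd_div_gcd hg0
    have hprim : IsPrimitiveRoot (ζ ^ j) d := by
      have := hprim_g.pow_of_coprime (j / g) hcop
      rwa [← pow_mul, ← hjg] at this
    obtain ⟨h, ε, hε, heq⟩ := H d hd2 hddvd (ζ ^ j) hprim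
    have heqabs := congrArg (‖·‖) heq
    rw [norm_mul, norm_mul, norm_mul, norm_mul, norm_mul] at heqabs
    have hεabs : ‖((ε : ℤ) : ℂ)‖ = 1 := by
      rcases hε with rfl | rfl <;> simp
    have hζjh : ‖(ζ ^ j) ^ h‖ = 1 := by
      rw [← pow_mul, norm_pow, habs1, one_pow]
    rw [hεabs, hζjh, one_mul, one_mul] at heqabs
    have hPabs : ‖((P : ℤ) : ℂ)‖ = N := by
      rw [hN, Complex.norm_intCast, ← Int.cast_abs, Int.abs_eq_natAbs, Int.cast_natCast]
    rw [hPabs, ← pow_mul, ← pow_mul, ← pow_mul] at heqabs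
    exact heqabs
  have hprodeq := Finset.prod_congr rfl key
  have hcard : S.card = p - 1 := by
    rw [hS, Finset.card_erase_of_mem (Finset.mem_univ _), Finset.card_univ, ZMod.card]
  set E : ℝ := ∏ x ∈ S, ‖ζ ^ x.val - 1‖ with hE
  have hEpos : 0 < E := by
    apply Finset.prod_pos
    intro x hx
    have hx0 : x ≠ 0 := (Finset.mem_erase.mp hx).1
    have hj0 : 0 < x.val := Nat.pos_of_ne_zero (fun h => hx0 (by rwa [← ZMod.val_eq_zero x]))
    have hne : ζ ^ x.val ≠ 1 := hζ.pow_ne_one_of_pos_of_lt hj0.ne' (ZMod.val_lt x)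
    have : ζ ^ x.val - 1 ≠ 0 := sub_ne_zero.mpr hne
    exact norm_pos_iff.mpr this
  have ha' : ∏ x ∈ S, ‖ζ ^ (x.val * a) - 1‖ = E :=
    reindex_prod h1 ha (fun z => ‖z - 1‖)
  have hb' : ∏ x ∈ S, ‖ζ ^ (x.val * b) - 1‖ = E :=
    reindex_prod h1 hb (fun z => ‖z - 1‖)
  have hc' : ∏ x ∈ S, ‖ζ ^ (x.val * c) - 1‖ = E :=
    reindex_prod h1 hc (fun z => ‖z - 1‖)
  rw [Finset.prod_mul_distrib, Finset.prod_mul_distrib, Finset.prod_mul_distrib,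
    Finset.prod_const, hcard, ha', hb', hc', ← hE] at hprodeq
  have hNpow : N ^ (p - 1) = 1 := by
    have hEE : E * E ≠ 0 := by positivity
    have : N ^ (p - 1) * (E * E) = 1 * (E * E) := by ring_nf; ring_nf at hprodeq; linarith
    exact mul_right_cancel₀ hEE this
  have : (P.natAbs : ℝ) ^ (p - 1) = 1 := hNpow
  have hnat : P.natAbs ^ (p - 1) = 1 := by exact_mod_cast this
  have hle : P.natAbs ≤ P.natAbs ^ (p - 1) := Nat.le_self_pow (by omega) _
  have h0 : P.natAbs ≠ 0 := Int.natAbs_ne_zero.mpr hP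
  have h1' : 1 ≤ P.natAbs ^ (p - 1) := hnat.ge
  omega
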